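/- arXiv:2503.00718 — 2 statements merged into one kernel-verified Lean document; each statement's English description precedes it below -/
import Mathlib

section
/- With the discrete kernel p(x^γ_n, x^γ_{n+1}) for the perturbed dynamics, change-of-variable Jacobian J^γ_{n+1} = (1 + γ δσ^γ(x^γ_n)/σ(x_n))^M, and damped perturbation v defined by v_{n+1} = v_n - α_n v_n Δt + δF^γ(x^γ_n)Δt + δσ^γ(x^γ_n)Δb_n, the sum of the logarithmic kernel derivative and the Jacobian derivative at γ=0 simplifies to δp/p + δJ = ⟨Δb_n, α_n v_n⟩/σ(x_n), i.e., the terms involving δF and δσ cancel exactly. -/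
open Real

/-- key cancellation: with
`v₁ = v₀ - αΔt v₀ + δF Δt + δσ Δb`, the sum of the logarithmic kernel derivative
`δp/p = -M δσ/σ - ⟨Δb, v₁-v₀-δFΔt⟩/(σΔt) + ‖Δb‖² δσ/(σΔt)` and the Jacobian
derivative `δJ = M δσ/σ` equals `⟨Δb, αv₀⟩/σ`. -/
theorem path_kernel_cancellation
    (M : ℕ) (Δt σ α δσ : ℝ) (hΔt : 0 < Δt) (hσ : 0 < σ)
    (Δb v0 v1 δF : EuclideanSpace ℝ (Fin M))
    (hv1 : v1 = v0 - (α * Δt) • v0 + Δt • δF + δσ • Δb) :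
    (-(M : ℝ) * δσ / σ
        - (inner ℝ Δb (v1 - v0 - Δt • δF) : ℝ) / (σ * Δt)
        + ‖Δb‖ ^ 2 * δσ / (σ * Δt))
      + (M : ℝ) * δσ / σ
      = (inner ℝ Δb (α • v0) : ℝ) / σ := by
  have hd : v1 - v0 - Δt • δF = (-(α * Δt)) • v0 + δσ • Δb := by
    rw [hv1]; module
  rw [hd, inner_add_right, inner_smul_right, inner_smul_right, inner_smul_right,
    real_inner_self_eq_norm_sq]
  field_simp
  ring
end

section
/- Let Z ~ N(0, I_M), Φ : ℝ^M → ℝ differentiable with polynomially bounded Φ and ∇Φ, and let f(γ) = E[Φ((1+γ)Z)] for γ > -1. Then f is differentiable and f'(γ) = E[Φ((1+γ)Z)(‖Z‖² - M)]/(1+γ); in particular at γ = 0, d/dγ E[Φ((1+γ)Z)]|_{γ=0} = E[Φ(Z)(‖Z‖² - M)]. -/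
open MeasureTheory Real
set_option maxHeartbeats 1000000


lemma gauss_integrable (M : ℕ) {b : ℝ} (hb : 0 < b) :
    Integrable (fun v : EuclideanSpace ℝ (Fin M) => Real.exp (-b * ‖v‖^2)) := by
  have h := (GaussianFourier.integrable_cexp_neg_mul_sq_norm_add
      (V := EuclideanSpace ℝ (Fin M)) (b := (b:ℂ)) (by simpa using hb) 0 0).norm
  refine h.congr (Filter.Eventually.of_forall fun v => ?_)
  simp [Complex.norm_exp]
  left; norm_cast

lemma poly_gauss_integrable (M k : ℕ) {b : ℝ} (hb : 0 < b) :
    Integrable (fun v : EuclideanSpace ℝ (Fin M) => (1+‖v‖)^k * Real.exp (-b * ‖v‖^2)) := by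
  refine ((gauss_integrable M (b := b/2) (by linarith)).const_mul
    (Real.exp ((k:ℝ)^2/(2*b)))).mono' ?_ ?_
  · exact (Continuous.pow (by continuity) k).mul (by continuity) |>.aestronglyMeasurable
  · refine Filter.Eventually.of_forall fun v => ?_
    set t := ‖v‖ with ht
    have ht0 : 0 ≤ t := norm_nonneg v
    rw [Real.norm_of_nonneg (by positivity)]
    have h1 : (1+t)^k ≤ rexp ((k:ℝ)*t) := by
      calc (1+t)^k ≤ (rexp t)^k :=
            pow_le_pow_left₀ (by positivity) (by linarith [Real.add_one_le_exp t]) k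
        _ = rexp ((k:ℝ)*t) := by rw [← Real.exp_nat_mul]
    have h2 : (k:ℝ)*t ≤ (k:ℝ)^2/(2*b) + (b/2)*t^2 := by
      have h3 : 2*b*((k:ℝ)*t) ≤ (k:ℝ)^2 + (b*t)^2 := by nlinarith [sq_nonneg ((k:ℝ) - b*t)]
      calc (k:ℝ)*t = (2*b*((k:ℝ)*t))/(2*b) := by field_simp
        _ ≤ ((k:ℝ)^2 + (b*t)^2)/(2*b) := by gcongr
        _ = (k:ℝ)^2/(2*b) + (b/2)*t^2 := by field_simp
    calc (1+t)^k * rexp (-b*t^2) ≤ rexp ((k:ℝ)*t) * rexp (-b*t^2) := by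
          gcongr
      _ = rexp ((k:ℝ)*t - b*t^2) := by rw [← Real.exp_add]; ring_nf
      _ ≤ rexp ((k:ℝ)^2/(2*b) - (b/2)*t^2) := by
          apply Real.exp_le_exp.2; linarith
      _ = rexp ((k:ℝ)^2/(2*b)) * rexp (-(b/2)*t^2) := by rw [← Real.exp_add]; ring_nf

lemma cov_lemma (M : ℕ) (Ψ : EuclideanSpace ℝ (Fin M) → ℝ) {c : ℝ} (hc : 0 < c) (K : ℝ) :
    ∫ z : EuclideanSpace ℝ (Fin M), Ψ (c • z) * (K * rexp (-‖z‖^2/2))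
      = (c^M)⁻¹ * ∫ y : EuclideanSpace ℝ (Fin M), Ψ y * (K * rexp (-‖y‖^2/(2*c^2))) := by
  have h := MeasureTheory.Measure.integral_comp_smul_of_nonneg (μ := volume)
    (fun y : EuclideanSpace ℝ (Fin M) => Ψ y * (K * rexp (-‖y‖^2/(2*c^2)))) c (hR := hc.le)
  rw [finrank_euclideanSpace_fin] at h
  simp only [smul_eq_mul] at h
  rw [← h]
  refine integral_congr_ae (Filter.Eventually.of_forall fun z => ?_)
  have hn : ‖c • z‖ = c * ‖z‖ := by
    rw [norm_smul, Real.norm_of_nonneg hc.le]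
  simp only [hn]
  congr 2
  field_simp

lemma auxH_hasDerivAt (M : ℕ) (K a : ℝ) {x : ℝ} (hx : 0 < 1 + x) :
    HasDerivAt (fun t : ℝ => ((1+t)^M)⁻¹ * (K * Real.exp (-a/(2*(1+t)^2))))
      (((1+x)^M)⁻¹ * (K * Real.exp (-a/(2*(1+x)^2))) * ((a/(1+x)^2 - M)/(1+x))) x := by
  have hc : (1+x) ≠ 0 := hx.ne'
  have h1 : HasDerivAt (fun t : ℝ => 1+t) 1 x := by
    simpa using (hasDerivAt_id x).const_add (1:ℝ)
  have hpow : HasDerivAt (fun t : ℝ => (1+t)^M) ((M:ℝ)*(1+x)^(M-1)*1) x := h1.pow M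
  have hA : HasDerivAt (fun t : ℝ => ((1+t)^M)⁻¹)
      (-((M:ℝ)*(1+x)^(M-1)*1) / ((1+x)^M)^2) x := hpow.inv (pow_ne_zero _ hc)
  have hsq : HasDerivAt (fun t : ℝ => 2*(1+t)^2) (2*((2:ℝ)*(1+x)^(2-1)*1)) x :=
    (h1.pow 2).const_mul 2
  have hinv2 : HasDerivAt (fun t : ℝ => (2*(1+t)^2)⁻¹)
      (-(2*((2:ℝ)*(1+x)^(2-1)*1)) / (2*(1+x)^2)^2) x := hsq.inv (by positivity)
  have hu : HasDerivAt (fun t : ℝ => -a * (2*(1+t)^2)⁻¹)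
      (-a * (-(2*((2:ℝ)*(1+x)^(2-1)*1)) / (2*(1+x)^2)^2)) x := hinv2.const_mul (-a)
  have hB : HasDerivAt (fun t : ℝ => Real.exp (-a * (2*(1+t)^2)⁻¹))
      (Real.exp (-a * (2*(1+x)^2)⁻¹) * (-a * (-(2*((2:ℝ)*(1+x)^(2-1)*1)) / (2*(1+x)^2)^2))) x :=
    hu.exp
  have hKB : HasDerivAt (fun t : ℝ => K * Real.exp (-a * (2*(1+t)^2)⁻¹))
      (K * (Real.exp (-a * (2*(1+x)^2)⁻¹) * (-a * (-(2*((2:ℝ)*(1+x)^(2-1)*1)) / (2*(1+x)^2)^2)))) x :=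
    hB.const_mul K
  have hfull := hA.mul hKB
  have heq : ∀ t : ℝ, -a/(2*(1+t)^2) = -a * (2*(1+t)^2)⁻¹ := fun t => by ring
  simp_rw [heq]
  refine HasDerivAt.congr_deriv hfull ?_
  cases M with
  | zero => simp; field_simp
  | succ n =>
    simp only [Nat.succ_sub_one, pow_succ]
    push_cast
    field_simp
    ring


lemma bound_aux (M k : ℕ) {K C cm cM c t p : ℝ} (hK : 0 ≤ K) (hC : 0 ≤ C)
    (hcm : 0 < cm) (hc1 : cm ≤ c) (hc2 : c ≤ cM) (ht : 0 ≤ t) (hp : |p| ≤ C*(1+t)^k) :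
    |p * (((c^M)⁻¹ * (K * rexp (-t^2/(2*c^2)))) * ((t^2/c^2 - (M:ℝ))/c))|
      ≤ (C * (K * ((cm^M)⁻¹ * ((cm⁻¹*cm⁻¹ + (M:ℝ)) * cm⁻¹))))
        * ((1+t)^(k+2) * rexp (-(1/(2*cM^2)) * t^2)) := by
  have hc : 0 < c := lt_of_lt_of_le hcm hc1
  have hcM : 0 < cM := lt_of_lt_of_le hc hc2
  have h2 : (1:ℝ) ≤ (1+t)^2 := by nlinarith
  have h1 : t^2/c^2 ≤ cm⁻¹*cm⁻¹*(1+t)^2 := by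
    have : t^2/c^2 ≤ (1+t)^2/cm^2 := by gcongr <;> nlinarith
    calc t^2/c^2 ≤ (1+t)^2/cm^2 := this
      _ = cm⁻¹*cm⁻¹*(1+t)^2 := by field_simp
  have e1 : |t^2/c^2 - (M:ℝ)| ≤ (cm⁻¹*cm⁻¹ + (M:ℝ)) * (1+t)^2 := by
    have hM : (0:ℝ) ≤ M := Nat.cast_nonneg M
    have h3 : (0:ℝ) ≤ t^2/c^2 := by positivity
    have h4 : (0:ℝ) ≤ cm⁻¹*cm⁻¹ := by positivity
    rcases abs_cases (t^2/c^2 - (M:ℝ)) with ⟨he, _⟩ | ⟨he, _⟩ <;> rw [he] <;> nlinarith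
  have eexp : rexp (-t^2/(2*c^2)) ≤ rexp (-(1/(2*cM^2)) * t^2) := by
    apply Real.exp_le_exp.2
    have h6 : t^2/(2*cM^2) ≤ t^2/(2*c^2) := by gcongr
    have e : -t^2/(2*c^2) = -(t^2/(2*c^2)) := by ring
    have e' : -(1/(2*cM^2)) * t^2 = -(t^2/(2*cM^2)) := by ring
    rw [e, e']; linarith
  have epow : (c^M)⁻¹ ≤ (cm^M)⁻¹ := by gcongr
  calc |p * (((c^M)⁻¹ * (K * rexp (-t^2/(2*c^2)))) * ((t^2/c^2 - (M:ℝ))/c))|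
      = |p| * (((c^M)⁻¹ * (K * rexp (-t^2/(2*c^2)))) * (|t^2/c^2 - (M:ℝ)|/c)) := by
        rw [abs_mul, abs_mul, abs_div, abs_of_nonneg (by positivity : (0:ℝ) ≤ (c^M)⁻¹ * (K * rexp (-t^2/(2*c^2)))), abs_of_nonneg hc.le]
    _ ≤ (C*(1+t)^k) * (((cm^M)⁻¹ * (K * rexp (-(1/(2*cM^2)) * t^2))) * (((cm⁻¹*cm⁻¹ + (M:ℝ)) * (1+t)^2)/cm)) := by
        gcongr
    _ = (C * (K * ((cm^M)⁻¹ * ((cm⁻¹*cm⁻¹ + (M:ℝ)) * cm⁻¹)))) * ((1+t)^(k+2) * rexp (-(1/(2*cM^2)) * t^2)) := by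
        rw [pow_add]; field_simp


/-- for `Z ~ N(0,I_M)` and `f(γ) = E[Φ((1+γ)Z)]`, `f` is
differentiable for `γ > -1` with
`f'(γ) = E[Φ((1+γ)Z)(‖Z‖² - M)]/(1+γ)`; in particular
`f'(0) = E[Φ(Z)(‖Z‖² - M)]`. -/
theorem diffusion_scaling_kernel_derivative
    (M : ℕ) (Φ : EuclideanSpace ℝ (Fin M) → ℝ)
    (hΦ : Differentiable ℝ Φ)
    (hΦgrowth : ∃ C k, ∀ z, |Φ z| ≤ C * (1 + ‖z‖) ^ k)
    (hgradgrowth : ∃ C k, ∀ z, ‖fderiv ℝ Φ z‖ ≤ C * (1 + ‖z‖) ^ k)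
    (g : EuclideanSpace ℝ (Fin M) → ℝ)
    (hg : ∀ z, g z = (2 * π) ^ (-(M : ℝ) / 2) * Real.exp (-‖z‖ ^ 2 / 2)) :
    (∀ γ : ℝ, -1 < γ →
      HasDerivAt (fun γ' : ℝ => ∫ z, Φ ((1 + γ') • z) * g z)
        ((∫ z, Φ ((1 + γ) • z) * (‖z‖ ^ 2 - M) * g z) / (1 + γ)) γ) ∧
    HasDerivAt (fun γ' : ℝ => ∫ z, Φ ((1 + γ') • z) * g z)
      (∫ z, Φ z * (‖z‖ ^ 2 - M) * g z) 0 := by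
  obtain ⟨C, k, hΦg⟩ := hΦgrowth
  set K : ℝ := (2 * π) ^ (-(M : ℝ) / 2) with hKdef
  have hKpos : 0 < K := Real.rpow_pos_of_pos (by positivity) _
  have hC : 0 ≤ C := by
    have := (abs_nonneg (Φ 0)).trans (hΦg 0)
    simpa using this
  have hΦc : Continuous Φ := hΦ.continuous
  have key : ∀ γ : ℝ, -1 < γ →
      HasDerivAt (fun γ' : ℝ => ∫ z, Φ ((1 + γ') • z) * g z)
        ((∫ z, Φ ((1 + γ) • z) * (‖z‖ ^ 2 - M) * g z) / (1 + γ)) γ := by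
    intro γ hγ
    have hc0 : 0 < 1 + γ := by linarith
    set cm : ℝ := (1 + γ) / 2 with hcmdef
    set cM : ℝ := 1 + γ + (1 + γ) / 2 with hcMdef
    have hcm : 0 < cm := by positivity
    have hcM : 0 < cM := by positivity
    set ε : ℝ := (1 + γ) / 2 with hεdef
    have hε : 0 < ε := by positivity
    -- the transformed integrand and its derivative
    set H : ℝ → EuclideanSpace ℝ (Fin M) → ℝ :=
      fun x y => ((1 + x) ^ M)⁻¹ * (K * rexp (-‖y‖ ^ 2 / (2 * (1 + x) ^ 2))) with hHdef
    set F' : ℝ → EuclideanSpace ℝ (Fin M) → ℝ :=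
      fun x y => Φ y * (H x y * ((‖y‖ ^ 2 / (1 + x) ^ 2 - (M : ℝ)) / (1 + x))) with hF'def
    have hcont : ∀ x : ℝ, Continuous fun y : EuclideanSpace ℝ (Fin M) => Φ y * H x y := by
      intro x
      exact hΦc.mul (continuous_const.mul (continuous_const.mul
        (Real.continuous_exp.comp ((continuous_norm.pow 2).neg.div_const _))))
    -- equality of the two representations on (-1, ∞)
    have hrepr : ∀ x : ℝ, -1 < x →
        ∫ z, Φ ((1 + x) • z) * g z = ∫ y, Φ y * H x y := by
      intro x hx
      have hcx : 0 < 1 + x := by linarith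
      have hcov := cov_lemma M Φ hcx K
      simp_rw [hg]
      rw [hcov]
      rw [show (fun y : EuclideanSpace ℝ (Fin M) => Φ y * H x y)
          = fun y => ((1 + x) ^ M)⁻¹ * (Φ y * (K * rexp (-‖y‖ ^ 2 / (2 * (1 + x) ^ 2)))) by
        funext y; simp only [hHdef]; ring]
      rw [integral_const_mul]
    -- derivative of the integral of the transformed integrand
    have main := hasDerivAt_integral_of_dominated_loc_of_deriv_le (μ := volume)
      (F := fun x y => Φ y * H x y) (F' := F') (x₀ := γ)
      (bound := fun y => (C * (K * ((cm ^ M)⁻¹ * ((cm⁻¹ * cm⁻¹ + (M : ℝ)) * cm⁻¹))))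
        * ((1 + ‖y‖) ^ (k + 2) * rexp (-(1 / (2 * cM ^ 2)) * ‖y‖ ^ 2)))
      (Metric.ball_mem_nhds γ hε)
      (Filter.Eventually.of_forall fun x => (hcont x).aestronglyMeasurable)
      ?hFint ?hF'meas ?hbound ?hbint ?hdiff
    case hFint =>
      refine (((poly_gauss_integrable M k (b := 1 / (2 * (1 + γ) ^ 2)) (by positivity)).const_mul
        (C * (((1 + γ) ^ M)⁻¹ * K))).mono' (hcont γ).aestronglyMeasurable ?_)
      refine Filter.Eventually.of_forall fun y => ?_
      have hHpos : 0 ≤ H γ y := by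
        simp only [hHdef]; positivity
      calc ‖Φ y * H γ y‖ = |Φ y| * H γ y := by rw [norm_mul, Real.norm_eq_abs, Real.norm_eq_abs, abs_of_nonneg hHpos]
        _ ≤ (C * (1 + ‖y‖) ^ k) * H γ y := by gcongr; exact hΦg y
        _ = C * (((1 + γ) ^ M)⁻¹ * K) * ((1 + ‖y‖) ^ k * rexp (-(1 / (2 * (1 + γ) ^ 2)) * ‖y‖ ^ 2)) := by
            simp only [hHdef]
            rw [show -‖y‖ ^ 2 / (2 * (1 + γ) ^ 2) = -(1 / (2 * (1 + γ) ^ 2)) * ‖y‖ ^ 2 by ring]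
            ring
    case hF'meas =>
      refine Continuous.aestronglyMeasurable ?_
      simp only [hF'def, hHdef]
      continuity
    case hbound =>
      refine Filter.Eventually.of_forall fun y => ?_
      intro x hx
      rw [Real.ball_eq_Ioo] at hx
      have hc1 : cm ≤ 1 + x := by
        simp only [hcmdef]; rcases hx with ⟨h', _⟩; simp only [hεdef] at h'; linarith
      have hc2 : 1 + x ≤ cM := by
        simp only [hcMdef]; rcases hx with ⟨_, h'⟩; simp only [hεdef] at h'; linarith
      simp only [hF'def, hHdef, Real.norm_eq_abs]
      exact bound_aux M k hKpos.le hC hcm hc1 hc2 (norm_nonneg y) (hΦg y)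
    case hbint =>
      exact (poly_gauss_integrable M (k + 2) (b := 1 / (2 * cM ^ 2)) (by positivity)).const_mul _
    case hdiff =>
      refine Filter.Eventually.of_forall fun y => ?_
      intro x hx
      rw [Real.ball_eq_Ioo] at hx
      have hcx : 0 < 1 + x := by
        rcases hx with ⟨h', _⟩; simp only [hεdef] at h'; linarith
      simpa only [hF'def, hHdef] using (auxH_hasDerivAt M K (‖y‖ ^ 2) hcx).const_mul (Φ y)
    -- identify the derivative value
    have hval : ∫ y, F' γ y = (∫ z, Φ ((1 + γ) • z) * (‖z‖ ^ 2 - (M : ℝ)) * g z) / (1 + γ) := by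
      set Ψ : EuclideanSpace ℝ (Fin M) → ℝ :=
        fun y => Φ y * (‖(1 + γ)⁻¹ • y‖ ^ 2 - (M : ℝ)) with hΨdef
      have hcov := cov_lemma M Ψ hc0 K
      have hΨ1 : ∀ z : EuclideanSpace ℝ (Fin M), Ψ ((1 + γ) • z) = Φ ((1 + γ) • z) * (‖z‖ ^ 2 - (M : ℝ)) := by
        intro z; simp only [hΨdef, inv_smul_smul₀ hc0.ne']
      have hΨ2 : ∀ y : EuclideanSpace ℝ (Fin M),
          Ψ y = Φ y * (‖y‖ ^ 2 / (1 + γ) ^ 2 - (M : ℝ)) := by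
        intro y
        simp only [hΨdef, norm_smul, Real.norm_eq_abs, abs_of_nonneg (inv_nonneg.2 hc0.le)]
        rw [mul_pow, inv_pow, div_eq_mul_inv]
        ring
      have e1 : ∀ y : EuclideanSpace ℝ (Fin M), F' γ y
          = (1 + γ)⁻¹ * (((1 + γ) ^ M)⁻¹ * (Ψ y * (K * rexp (-‖y‖ ^ 2 / (2 * (1 + γ) ^ 2))))) := by
        intro y
        rw [hΨ2]
        simp only [hF'def, hHdef]
        ring
      simp_rw [e1]
      rw [integral_const_mul, integral_const_mul, ← hcov]
      simp_rw [hΨ1, hg]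
      rw [div_eq_inv_mul]
    rw [← hval]
    exact main.2.congr_of_eventuallyEq <|
      (eventually_gt_nhds hγ).mono fun x hx => hrepr x hx
  refine ⟨key, ?_⟩
  have h0 := key 0 (by norm_num)
  simpa using h0
end
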